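/- Assume 𝔟 = 𝔡 = ℵ₁, and suppose ⟨f_α : α < ω₁⟩ is a sequence in ω^ω such that {f_α : α < ω₁} is dominating, f_α ≤* f_β whenever α < β, and for every α < ω₁ and k ∈ ω the set {β < ω₁ : f_β(n) ≤ f_α(n) for all n ≥ k} is finite. Then D = {(s, f_α) : s ∈ ω^{<ω}, α < ω₁} is a dense subset of the Hechler forcing ℍ and every condition of ℍ extends only finitely many elements of D; hence πNt(ℍ) = ℵ₀. -/

import Mathlib

open Cardinal

def LeStar (f g : ℕ → ℕ) : Prop := ∀ᶠ n in Filter.cofinite, f n ≤ g n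

noncomputable def bNum : Cardinal.{0} :=
  sInf {c : Cardinal | ∃ A : Set (ℕ → ℕ), #A = c ∧ ¬ ∃ g, ∀ f ∈ A, LeStar f g}

noncomputable def dNum : Cardinal.{0} :=
  sInf {c : Cardinal | ∃ A : Set (ℕ → ℕ), #A = c ∧ ∀ f, ∃ g ∈ A, LeStar f g}

abbrev Hechler : Type := List ℕ × (ℕ → ℕ)

def HLe (p q : Hechler) : Prop :=
  q.1 <+: p.1 ∧ (∀ n, p.1.length ≤ n → q.2 n ≤ p.2 n) ∧
    (∀ n, q.1.length ≤ n → n < p.1.length → q.2 n ≤ p.1.getD n 0)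

theorem hle_refl (p : Hechler) : HLe p p :=
  ⟨List.prefix_rfl, fun _ _ => le_rfl, fun n h1 h2 => absurd h1 (by omega)⟩

theorem hle_trans {p q r : Hechler} (hpq : HLe p q) (hqr : HLe q r) : HLe p r := by
  obtain ⟨h1, h2, h3⟩ := hpq
  obtain ⟨g1, g2, g3⟩ := hqr
  have hlen : q.1.length ≤ p.1.length := h1.length_le
  refine ⟨g1.trans h1, fun n hn => (g2 n (le_trans hlen hn)).trans (h2 n hn), fun n hn1 hn2 => ?_⟩
  rcases lt_or_ge n q.1.length with hq | hq
  · obtain ⟨u, hu⟩ := h1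
    calc r.2 n ≤ q.1.getD n 0 := g3 n hn1 hq
      _ = p.1.getD n 0 := by rw [← hu, List.getD_append _ _ _ _ hq]
  · exact (g2 n hq).trans (h3 n hq hn2)

theorem leStar_bound {f g : ℕ → ℕ} (h : LeStar f g) : ∃ k, ∀ n, k ≤ n → f n ≤ g n := by
  have := h
  rw [LeStar, Nat.cofinite_eq_atTop, Filter.eventually_atTop] at this
  obtain ⟨k, hk⟩ := this
  exact ⟨k, hk⟩

theorem stmt_14 (hb : bNum = aleph 1) (hd : dNum = aleph 1)
    (f : (aleph 1).ord.ToType → (ℕ → ℕ))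
    (hdom : ∀ h : ℕ → ℕ, ∃ α, LeStar h (f α))
    (hmono : ∀ α β, α < β → LeStar (f α) (f β))
    (hfin : ∀ α, ∀ k : ℕ, {β | ∀ n, k ≤ n → f β n ≤ f α n}.Finite) :
    (∀ p : Hechler, ∃ q ∈ {r : Hechler | ∃ α, r.2 = f α}, HLe q p) ∧
    (∀ p : Hechler, {q : Hechler | (∃ α, q.2 = f α) ∧ HLe p q}.Finite) ∧
    sInf {c : Cardinal | ∃ D : Set Hechler,
      (∀ p : Hechler, ∃ q ∈ D, HLe q p) ∧
      ∀ p : Hechler, #{q : Hechler | q ∈ D ∧ HLe p q} < c} = ℵ₀ := by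
  -- Density
  have dense : ∀ p : Hechler, ∃ q ∈ {r : Hechler | ∃ α, r.2 = f α}, HLe q p := by
    intro ⟨s, g⟩
    obtain ⟨α, hα⟩ := hdom g
    obtain ⟨k, hk⟩ := leStar_bound hα
    set m := max k s.length with hm
    set t : List ℕ := s ++ (List.range (m - s.length)).map (fun i => g (s.length + i)) with ht
    have htlen : t.length = m := by
      simp [ht]; omega
    have hget : ∀ n, s.length ≤ n → n < m → t.getD n 0 = g n := by
      intro n hn1 hn2
      rw [ht, List.getD_append_right _ _ _ _ hn1,
        List.getD_eq_getElem _ _ (by simp only [List.length_map, List.length_range]; omega)]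
      simp only [List.getElem_map, List.getElem_range]
      congr 1; omega
    refine ⟨(t, f α), ⟨α, rfl⟩, ⟨List.prefix_append _ _, ?_, ?_⟩⟩
    · intro n hn
      simp only at hn
      rw [htlen] at hn
      exact hk n (by omega)
    · intro n hn1 hn2
      rw [htlen] at hn2
      exact le_of_eq (hget n hn1 hn2).symm
  -- Finiteness of fibers
  have fib : ∀ p : Hechler, {q : Hechler | (∃ α, q.2 = f α) ∧ HLe p q}.Finite := by
    intro ⟨s, g⟩
    obtain ⟨α₀, hα₀⟩ := hdom g
    obtain ⟨k, hk⟩ := leStar_bound hα₀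
    set K := max k s.length with hK
    have hsub : {q : Hechler | (∃ α, q.2 = f α) ∧ HLe (s, g) q} ⊆
        {t : List ℕ | t <+: s} ×ˢ (f '' {β | ∀ n, K ≤ n → f β n ≤ f α₀ n}) := by
      rintro ⟨t, h⟩ ⟨⟨α, hα⟩, hpre, h2, _⟩
      refine ⟨hpre, α, fun n hn => ?_, hα.symm⟩
      have := h2 n (by simp at hn ⊢; omega)
      rw [hα] at this
      exact this.trans (hk n (by omega))
    refine Set.Finite.subset (Set.Finite.prod ?_ ((hfin α₀ K).image f)) hsub
    have : {t : List ℕ | t <+: s} ⊆ ↑s.inits.toFinset := by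
      intro t ht; simp [List.mem_inits]; exact ht
    exact Set.Finite.subset (s.inits.toFinset.finite_toSet) this
  refine ⟨dense, fib, ?_⟩
  -- the πNt computation
  apply le_antisymm
  · apply csInf_le'
    refine ⟨{r : Hechler | ∃ α, r.2 = f α}, dense, fun p => ?_⟩
    rw [Cardinal.lt_aleph0_iff_set_finite]
    exact fib p
  · refine le_csInf ⟨ℵ₀, {r : Hechler | ∃ α, r.2 = f α}, dense, fun p => by
      rw [Cardinal.lt_aleph0_iff_set_finite]; exact fib p⟩ ?_
    rintro c ⟨D, hD, hcard⟩
    rw [Cardinal.aleph0_le]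
    intro n
    -- build a chain of n distinct elements of D below a single condition
    have step : ∀ p : Hechler, ∃ q : Hechler, q ∈ D ∧ HLe q p ∧ p.1.length < q.1.length := by
      intro p
      obtain ⟨q, hqD, hq⟩ := hD (p.1 ++ [p.2 p.1.length], p.2)
      have hext : HLe (p.1 ++ [p.2 p.1.length], p.2) p := by
        refine ⟨List.prefix_append _ _, fun n _ => le_rfl, fun n hn1 hn2 => ?_⟩
        have hn : n = p.1.length := by simp at hn2; omega
        subst hn
        rw [List.getD_append_right _ _ _ _ le_rfl]
        simp
      refine ⟨q, hqD, hle_trans hq hext, ?_⟩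
      have := hq.1.length_le
      simp at this
      omega
    choose nxt hnD hnle hnlen using step
    -- iterate
    obtain ⟨p₀, hp₀D, _⟩ := hD ([], fun _ => 0)
    let seq : ℕ → Hechler := fun i => Nat.rec p₀ (fun _ q => nxt q) i
    have hseqD : ∀ i, seq i ∈ D := by
      intro i; cases i with
      | zero => exact hp₀D
      | succ j => exact hnD _
    have hlt : ∀ i, (seq i).1.length < (seq (i+1)).1.length := fun i => hnlen (seq i)
    have hmonolen : StrictMono (fun i => (seq i).1.length) := strictMono_nat_of_lt_succ hlt
    have hle : ∀ i j, i ≤ j → HLe (seq j) (seq i) := by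
      intro i j hij
      induction j with
      | zero => cases Nat.le_zero.mp hij; exact hle_refl _
      | succ m ih =>
        rcases Nat.lt_or_ge i (m+1) with h | h
        · exact hle_trans (hnle (seq m)) (ih (by omega))
        · have : i = m + 1 := by omega
          subst this; exact hle_refl _
    have hinj : Function.Injective seq := by
      intro a b hab
      by_contra hne
      rcases Ne.lt_or_gt hne with h | h
      · exact absurd (congrArg (fun q : Hechler => q.1.length) hab) (Nat.ne_of_lt (hmonolen h))
      · exact absurd (congrArg (fun q : Hechler => q.1.length) hab) (Nat.ne_of_gt (hmonolen h))
    -- n distinct elements in fiber at seq n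
    have hcn := hcard (seq n)
    have : (n : Cardinal) ≤ #{q : Hechler | q ∈ D ∧ HLe (seq n) q} := by
      have : (n : Cardinal) = #(Fin n) := (Cardinal.mk_fin n).symm
      rw [this]
      refine Cardinal.mk_le_of_injective (f := fun i : Fin n =>
        (⟨seq i, hseqD i, hle i n (le_of_lt i.isLt)⟩ :
          {q : Hechler | q ∈ D ∧ HLe (seq n) q})) ?_
      intro a b hab
      have := hinj (congrArg Subtype.val hab)
      exact Fin.ext this
    exact this.trans (le_of_lt hcn)
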